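/- For every integer n ≥ 1, the following polynomial identity in two variables x and y over ℚ holds: ∑_{r=2}^{n+1} (x^r / r) C(n-1, r-2) · binom(y, r-1) = (1/(y+1)) · binom(y+n, n+1) + ∑_{r=1}^{n} C(n-1, r-1) · binom(y+n-r, n) · ( (x−1)^{r+1}/(r+1) + (x−1)^r/r ), where (1/(y+1))·binom(y+n, n+1) is the polynomial (y+n)(y+n−1)⋯(y+2)/(n+1)!. -/

import Mathlib

/-- The generalized binomial coefficient `binom(y, k) = y(y−1)⋯(y−k+1)/k!`. -/
def binomQ (y : ℚ) (k : ℕ) : ℚ := (∏ i ∈ Finset.range k, (y - (i : ℚ))) / (k.factorial : ℚ)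

/-- The polynomial `binom(y+n, n+1)/(y+1)`, i.e. `y(y+2)(y+3)⋯(y+n)/(n+1)!`
(the result of dividing the generalized binomial coefficient `binom(y+n, n+1)`
through by its factor `y+1`). -/
def binomDiv (n : ℕ) (y : ℚ) : ℚ :=
  y * (∏ i ∈ Finset.range (n - 1), (y + (i : ℚ) + 2)) / ((n + 1).factorial : ℚ)

open Finset Polynomial

lemma facQ_ne (k : ℕ) : ((k.factorial : ℚ)) ≠ 0 := by exact_mod_cast k.factorial_ne_zero

lemma binomQ_zero (y : ℚ) : binomQ y 0 = 1 := by simp [binomQ]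

lemma prod_shift (z : ℚ) (s : ℕ) :
    ∏ i ∈ range (s+1), (z + 1 - (i:ℚ)) = (z+1) * ∏ i ∈ range s, (z - (i:ℚ)) := by
  rw [Finset.prod_range_succ']
  push_cast
  rw [mul_comm]
  congr 1
  · norm_num
  · exact Finset.prod_congr rfl (fun i _ => by push_cast; ring)

lemma binomQ_pascal (z : ℚ) (s : ℕ) :
    binomQ (z+1) (s+1) = binomQ z (s+1) + binomQ z s := by
  unfold binomQ
  rw [prod_shift, Finset.prod_range_succ, Nat.factorial_succ]
  have h1 : ((s+1 : ℕ) : ℚ) ≠ 0 := by positivity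
  have h2 := facQ_ne s
  push_cast
  field_simp
  ring

lemma binomQ_vandermonde (m : ℕ) (y : ℚ) : ∀ s : ℕ,
    binomQ (y + m) s = ∑ k ∈ range (s+1), (m.choose k : ℚ) * binomQ y (s - k) := by
  induction m with
  | zero =>
    intro s
    rw [Finset.sum_eq_single 0]
    · simp
    · intro k _ hk
      obtain ⟨t, rfl⟩ : ∃ t, k = t + 1 := ⟨k - 1, by omega⟩
      simp [Nat.choose]
    · simp
  | succ m ih =>
    intro s
    have hcast : y + ((m+1 : ℕ) : ℚ) = (y + m) + 1 := by push_cast; ring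
    cases s with
    | zero =>
      rw [hcast]
      simp [binomQ_zero]
    | succ s =>
      rw [hcast, binomQ_pascal, ih (s+1), ih s,
        Finset.sum_range_succ' (fun k => ((m+1).choose k : ℚ) * binomQ y (s + 1 - k)) (s+1),
        Finset.sum_range_succ' (fun k => (m.choose k : ℚ) * binomQ y (s + 1 - k)) (s+1)]
      simp only [Nat.choose_succ_succ, Nat.choose_zero_right, Nat.cast_add, Nat.cast_one,
        Nat.succ_sub_succ_eq_sub, Nat.sub_zero]
      simp only [add_mul, Finset.sum_add_distrib, Nat.succ_eq_add_one]
      ring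

lemma binomQ_vandermonde' (m s : ℕ) (y : ℚ) :
    binomQ (y + m) (m + s + 1) = ∑ t ∈ range (m+1), (m.choose t : ℚ) * binomQ y (s + t + 1) := by
  rw [binomQ_vandermonde m y (m + s + 1)]
  rw [← Finset.sum_subset (Finset.range_subset_range.2 (by omega : m + 1 ≤ m + s + 1 + 1))
      (fun k _ hk => by
        have : m < k := by simpa using hk
        simp [Nat.choose_eq_zero_of_lt this])]
  rw [← Finset.sum_range_reflect]
  refine Finset.sum_congr rfl (fun t ht => ?_)
  have ht' : t ≤ m := by simpa [Nat.lt_succ_iff] using ht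
  have h1 : m + 1 - 1 - t = m - t := by omega
  have h2 : m + s + 1 - (m - t) = s + t + 1 := by omega
  rw [h1, h2, Nat.choose_symm ht']

lemma inner_sum_eq (m i : ℕ) (hi : i ≤ m) (y : ℚ) :
    ∑ j ∈ range (m+1), (m.choose j : ℚ) * (j.choose i : ℚ) * binomQ y (j+1)
      = (m.choose i : ℚ) * binomQ (y + (m:ℚ) - (i:ℚ)) (m+1) := by
  have hc : y + (m:ℚ) - (i:ℚ) = y + ((m - i : ℕ) : ℚ) := by push_cast [Nat.cast_sub hi]; ring
  have hmi : (m - i) + i + 1 = m + 1 := by omega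
  rw [hc, ← hmi, binomQ_vandermonde' (m - i) i y, Finset.mul_sum, hmi]
  have hsub : Finset.Ico i (m+1) ⊆ Finset.range (m+1) := fun j hj => by
    simp only [Finset.mem_Ico] at hj
    exact Finset.mem_range.mpr hj.2
  rw [← Finset.sum_subset hsub (fun j hjr hj => by
    have hj1 := Finset.mem_range.mp hjr
    have hlt : j < i := by
      by_contra h
      exact hj (Finset.mem_Ico.mpr ⟨by omega, hj1⟩)
    simp [Nat.choose_eq_zero_of_lt hlt])]
  rw [Finset.sum_Ico_eq_sum_range]
  rw [show m + 1 - i = m - i + 1 by omega]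
  refine Finset.sum_congr rfl (fun t ht => ?_)
  have ht' : t ≤ m - i := by
    have := Finset.mem_range.mp ht; omega
  have h1 : i + t ≤ m := by omega
  have h2 : i ≤ i + t := by omega
  have hmul : ((m.choose (i+t) * (i+t).choose i : ℕ) : ℚ)
      = ((m.choose i * (m-i).choose t : ℕ) : ℚ) := by
    rw [Nat.choose_mul h2, Nat.add_sub_cancel_left]
  push_cast at hmul
  calc (m.choose (i+t) : ℚ) * ((i+t).choose i : ℚ) * binomQ y (i+t+1)
      = ((m.choose (i+t) : ℚ) * ((i+t).choose i : ℚ)) * binomQ y (i+t+1) := by ring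
    _ = ((m.choose i : ℚ) * (((m-i).choose t) : ℚ)) * binomQ y (i+t+1) := by rw [hmul]
    _ = (m.choose i : ℚ) * (((m-i).choose t : ℚ) * binomQ y (i+t+1)) := by ring

lemma deriv_identity (m : ℕ) (y z : ℚ) :
    ∑ j ∈ range (m+1), (m.choose j : ℚ) * binomQ y (j+1) * z^j
      = ∑ i ∈ range (m+1), (m.choose i : ℚ) * binomQ (y + (m:ℚ) - (i:ℚ)) (m+1) * (z-1)^i := by
  have hz : ∀ j ∈ range (m+1), z^j = ∑ i ∈ range (m+1), (j.choose i : ℚ) * (z-1)^i := by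
    intro j hj
    have hj' : j + 1 ≤ m + 1 := by have := Finset.mem_range.mp hj; omega
    have h0 : z ^ j = ((z-1)+1)^j := by ring_nf
    rw [h0, add_pow]
    rw [Finset.sum_subset (Finset.range_subset_range.2 hj') (fun k _ hk => by
      have : j < k := by simpa using hk
      simp [Nat.choose_eq_zero_of_lt this])]
    exact Finset.sum_congr rfl (fun i _ => by ring)
  calc ∑ j ∈ range (m+1), (m.choose j : ℚ) * binomQ y (j+1) * z^j
      = ∑ j ∈ range (m+1), ∑ i ∈ range (m+1),
          ((m.choose j : ℚ) * (j.choose i : ℚ) * binomQ y (j+1)) * (z-1)^i := by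
        refine Finset.sum_congr rfl (fun j hj => ?_)
        rw [hz j hj, Finset.mul_sum]
        exact Finset.sum_congr rfl (fun i _ => by ring)
    _ = ∑ i ∈ range (m+1), (∑ j ∈ range (m+1),
          (m.choose j : ℚ) * (j.choose i : ℚ) * binomQ y (j+1)) * (z-1)^i := by
        rw [Finset.sum_comm]
        exact Finset.sum_congr rfl (fun i _ => by rw [Finset.sum_mul])
    _ = ∑ i ∈ range (m+1), (m.choose i : ℚ) * binomQ (y + (m:ℚ) - (i:ℚ)) (m+1) * (z-1)^i := by
        refine Finset.sum_congr rfl (fun i hi => ?_)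
        have hi' : i ≤ m := by have := Finset.mem_range.mp hi; omega
        rw [inner_sum_eq m i hi' y]

lemma prod_desc (w : ℚ) (m : ℕ) :
    ∏ i ∈ range (m+2), (w + 1 + (m:ℚ) - (i:ℚ)) = w * (w+1) * ∏ i ∈ range m, (w + (i:ℚ) + 2) := by
  have h1 : ∀ i ∈ range (m+2), w + 1 + (m:ℚ) - (i:ℚ) = w + ((m+1-i : ℕ):ℚ) := by
    intro i hi
    have hi' : i ≤ m+1 := by have := Finset.mem_range.mp hi; omega
    push_cast [Nat.cast_sub hi']; ring
  rw [Finset.prod_congr rfl h1]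
  have h2 : ∏ i ∈ range (m+2), (w + ((m+1-i : ℕ):ℚ)) = ∏ j ∈ range (m+2), (w + (j:ℚ)) := by
    rw [← Finset.prod_range_reflect (fun j => w + (j:ℚ)) (m+2)]
    exact Finset.prod_congr rfl (fun i _ => by norm_num)
  rw [h2, Finset.prod_range_succ', Finset.prod_range_succ']
  have h3 : ∏ i ∈ range m, (w + ((i+1+1 : ℕ):ℚ)) = ∏ i ∈ range m, (w + (i:ℚ) + 2) :=
    Finset.prod_congr rfl (fun i _ => by push_cast; ring)
  rw [h3]
  push_cast
  ring

lemma eval_one_identity (m : ℕ) (y : ℚ) :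
    ∑ j ∈ range (m+1), (m.choose j : ℚ) * binomQ y (j+1) / ((j:ℚ)+2) = binomDiv (m+1) y := by
  set P1 : Polynomial ℚ := ∑ t ∈ range (m+1),
      Polynomial.C ((m.choose t : ℚ) / (((t+2).factorial : ℕ) : ℚ)) *
        ∏ i ∈ range (t+1), (Polynomial.X - Polynomial.C (i:ℚ)) with hP1
  set P2 : Polynomial ℚ := Polynomial.C (1/((((m+2).factorial : ℕ)) : ℚ)) *
      (Polynomial.X * ∏ i ∈ range m, (Polynomial.X + Polynomial.C (i:ℚ) + Polynomial.C 2)) with hP2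
  have hXC : (Polynomial.X + Polynomial.C (1:ℚ)) ≠ 0 := Polynomial.X_add_C_ne_zero 1
  have key : (Polynomial.X + Polynomial.C (1:ℚ)) * P1 = (Polynomial.X + Polynomial.C (1:ℚ)) * P2 := by
    apply Polynomial.funext
    intro w
    have e1 : ∀ t : ℕ, (w+1) * ((m.choose t : ℚ) / (((t+2).factorial : ℕ) : ℚ) *
        ∏ i ∈ range (t+1), (w - (i:ℚ))) = (m.choose t : ℚ) * binomQ (w+1) (t+2) := by
      intro t
      unfold binomQ
      rw [show t+2 = (t+1)+1 from rfl, prod_shift w (t+1)]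
      field_simp
    have e2 : binomQ (w+1+(m:ℚ)) (m+2)
        = (w+1) * (1/((((m+2).factorial : ℕ)) : ℚ) * (w * ∏ i ∈ range m, (w + (i:ℚ) + 2))) := by
      unfold binomQ
      rw [prod_desc w m]
      field_simp
    have e3 : ∑ t ∈ range (m+1), (m.choose t : ℚ) * binomQ (w+1) (t+2)
        = binomQ (w+1+(m:ℚ)) (m+2) := by
      have := binomQ_vandermonde' m 1 (w+1)
      rw [show (w+1) + (m:ℚ) = w + 1 + (m:ℚ) from rfl] at this
      rw [this]
      exact Finset.sum_congr rfl (fun t _ => by rw [show 1+t+1 = t+2 from by omega])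
    rw [hP1, hP2]
    simp only [Polynomial.eval_mul, Polynomial.eval_add, Polynomial.eval_X, Polynomial.eval_C,
      Polynomial.eval_finset_sum, Polynomial.eval_prod, Polynomial.eval_sub]
    rw [Finset.mul_sum]
    rw [Finset.sum_congr rfl (fun t _ => e1 t), e3, e2]
  have key' : P1 = P2 := mul_left_cancel₀ hXC key
  rw [hP1, hP2] at key'
  have := congrArg (Polynomial.eval y) key'
  simp only [Polynomial.eval_mul, Polynomial.eval_add, Polynomial.eval_X, Polynomial.eval_C,
    Polynomial.eval_finset_sum, Polynomial.eval_prod, Polynomial.eval_sub] at this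
  calc ∑ j ∈ range (m+1), (m.choose j : ℚ) * binomQ y (j+1) / ((j:ℚ)+2)
      = ∑ j ∈ range (m+1), (m.choose j : ℚ) / (((j+2).factorial : ℕ) : ℚ) *
          ∏ i ∈ range (j+1), (y - (i:ℚ)) := by
        refine Finset.sum_congr rfl (fun j _ => ?_)
        have hf : (((j+2).factorial : ℕ) : ℚ) = ((j:ℚ)+2) * (((j+1).factorial : ℕ) : ℚ) := by
          rw [Nat.factorial_succ (j+1)]; push_cast; ring
        have h2 : ((j:ℚ)+2) ≠ 0 := by positivity
        have h3 := facQ_ne (j+1)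
        unfold binomQ
        rw [hf]
        field_simp
    _ = binomDiv (m+1) y := by
        rw [this]
        unfold binomDiv
        simp only [Nat.add_sub_cancel]
        ring

lemma dpow (k : ℕ) : Polynomial.derivative ((Polynomial.X - 1 : Polynomial ℚ)^(k+1))
    = Polynomial.C ((k:ℚ)+1) * (Polynomial.X - 1)^k := by
  rw [Polynomial.derivative_pow]
  simp only [Polynomial.derivative_sub, Polynomial.derivative_X, Polynomial.derivative_one,
    sub_zero, mul_one, Nat.add_sub_cancel]
  push_cast
  ring

/-- For every integer `n ≥ 1`, as an identity in two variables `x, y` over `ℚ`: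
`∑_{r=2}^{n+1} (x^r/r) C(n-1,r-2) binom(y,r-1)
 = (1/(y+1)) binom(y+n, n+1)
   + ∑_{r=1}^{n} C(n-1,r-1) binom(y+n-r, n) ((x−1)^{r+1}/(r+1) + (x−1)^r/r)`. -/
theorem power_two_var_identity (n : ℕ) (hn : 1 ≤ n) (x y : ℚ) :
    ∑ r ∈ Finset.Icc 2 (n + 1),
        x ^ r / (r : ℚ) * ((n - 1).choose (r - 2) : ℚ) * binomQ y (r - 1) =
      binomDiv n y
        + ∑ r ∈ Finset.Icc 1 n,
            ((n - 1).choose (r - 1) : ℚ) * binomQ (y + (n : ℚ) - (r : ℚ)) n *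
              ((x - 1) ^ (r + 1) / ((r : ℚ) + 1) + (x - 1) ^ r / (r : ℚ)) := by
  obtain ⟨m, rfl⟩ : ∃ m, n = m + 1 := ⟨n - 1, by omega⟩
  have hL : ∑ r ∈ Finset.Icc 2 (m + 1 + 1),
        x ^ r / (r:ℚ) * ((m+1-1).choose (r-2) : ℚ) * binomQ y (r-1)
      = ∑ j ∈ range (m+1), (m.choose j : ℚ) * binomQ y (j+1) / ((j:ℚ)+2) * x^(j+2) := by
    rw [show m+1+1 = m+2 from rfl, ← Finset.Ico_add_one_right_eq_Icc, Finset.sum_Ico_eq_sum_range]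
    rw [show m+2+1-2 = m+1 by omega]
    refine Finset.sum_congr rfl (fun j _ => ?_)
    rw [show 2+j-2 = j by omega, show 2+j-1 = j+1 by omega, show m+1-1 = m by omega,
      show 2+j = j+2 by omega]
    push_cast
    ring
  have hR : ∑ r ∈ Finset.Icc 1 (m+1),
        (((m+1-1).choose (r-1) : ℕ) : ℚ) * binomQ (y + ((m+1 : ℕ):ℚ) - (r:ℚ)) (m+1) *
          ((x-1)^(r+1)/((r:ℚ)+1) + (x-1)^r/(r:ℚ))
      = ∑ i ∈ range (m+1), (m.choose i : ℚ) * binomQ (y + (m:ℚ) - (i:ℚ)) (m+1) *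
          ((x-1)^(i+2) * (1/((i:ℚ)+2)) + (x-1)^(i+1) * (1/((i:ℚ)+1))) := by
    rw [← Finset.Ico_add_one_right_eq_Icc, Finset.sum_Ico_eq_sum_range, show m+1+1-1 = m+1 by omega]
    refine Finset.sum_congr rfl (fun i _ => ?_)
    rw [show 1+i-1 = i by omega, show m+1-1 = m by omega,
      show y + ((m+1 : ℕ):ℚ) - ((1+i : ℕ):ℚ) = y + (m:ℚ) - (i:ℚ) by push_cast; ring,
      show 1+i = i+1 by omega]
    push_cast
    ring
  rw [hL, hR]
  set P : Polynomial ℚ := ∑ j ∈ range (m+1),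
      Polynomial.C ((m.choose j : ℚ) * binomQ y (j+1) / ((j:ℚ)+2)) * Polynomial.X^(j+2) with hP
  set Q : Polynomial ℚ := Polynomial.C (binomDiv (m+1) y) + ∑ i ∈ range (m+1),
      Polynomial.C ((m.choose i : ℚ) * binomQ (y + (m:ℚ) - (i:ℚ)) (m+1)) *
        ((Polynomial.X-1)^(i+2) * Polynomial.C (1/((i:ℚ)+2))
          + (Polynomial.X-1)^(i+1) * Polynomial.C (1/((i:ℚ)+1))) with hQ
  have hdP : Polynomial.derivative P = ∑ j ∈ range (m+1),
      Polynomial.C ((m.choose j : ℚ) * binomQ y (j+1)) * Polynomial.X^(j+1) := by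
    rw [hP, Polynomial.derivative_sum]
    refine Finset.sum_congr rfl (fun j _ => ?_)
    rw [Polynomial.derivative_C_mul, Polynomial.derivative_X_pow,
      show j+2-1 = j+1 by omega, ← mul_assoc, ← Polynomial.C_mul]
    congr 2
    have h2 : ((j:ℚ)+2) ≠ 0 := by positivity
    push_cast
    field_simp
  have hdQ : Polynomial.derivative Q = ∑ i ∈ range (m+1),
      Polynomial.C ((m.choose i : ℚ) * binomQ (y + (m:ℚ) - (i:ℚ)) (m+1)) *
        ((Polynomial.X-1)^(i+1) + (Polynomial.X-1)^i) := by
    rw [hQ, Polynomial.derivative_add, Polynomial.derivative_C, zero_add,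
      Polynomial.derivative_sum]
    refine Finset.sum_congr rfl (fun i _ => ?_)
    rw [Polynomial.derivative_C_mul, Polynomial.derivative_add,
      Polynomial.derivative_mul, Polynomial.derivative_mul,
      Polynomial.derivative_C, Polynomial.derivative_C, mul_zero, mul_zero,
      add_zero, add_zero, dpow (i+1), dpow i]
    congr 1
    have c1 : Polynomial.C (((i+1 : ℕ):ℚ)+1) * Polynomial.C (1/((i:ℚ)+2)) = 1 := by
      rw [← Polynomial.C_mul]
      have h2 : ((i:ℚ)+2) ≠ 0 := by positivity
      rw [show (((i+1 : ℕ):ℚ)+1) * (1/((i:ℚ)+2)) = 1 by push_cast; field_simp; ring]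
      exact Polynomial.C_1
    have c2 : Polynomial.C ((i:ℚ)+1) * Polynomial.C (1/((i:ℚ)+1)) = 1 := by
      rw [← Polynomial.C_mul]
      have h2 : ((i:ℚ)+1) ≠ 0 := by positivity
      rw [show ((i:ℚ)+1) * (1/((i:ℚ)+1)) = 1 by field_simp]
      exact Polynomial.C_1
    calc Polynomial.C (((i+1 : ℕ):ℚ)+1) * (Polynomial.X-1)^(i+1) * Polynomial.C (1/((i:ℚ)+2))
          + Polynomial.C ((i:ℚ)+1) * (Polynomial.X-1)^i * Polynomial.C (1/((i:ℚ)+1))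
        = (Polynomial.C (((i+1 : ℕ):ℚ)+1) * Polynomial.C (1/((i:ℚ)+2))) * (Polynomial.X-1)^(i+1)
          + (Polynomial.C ((i:ℚ)+1) * Polynomial.C (1/((i:ℚ)+1))) * (Polynomial.X-1)^i := by
          ring
      _ = (Polynomial.X-1)^(i+1) + (Polynomial.X-1)^i := by rw [c1, c2, one_mul, one_mul]
  have hde : Polynomial.derivative P = Polynomial.derivative Q := by
    rw [hdP, hdQ]
    apply Polynomial.funext
    intro z
    simp only [Polynomial.eval_finset_sum, Polynomial.eval_mul, Polynomial.eval_add,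
      Polynomial.eval_C, Polynomial.eval_pow, Polynomial.eval_sub, Polynomial.eval_X,
      Polynomial.eval_one]
    calc ∑ j ∈ range (m+1), (m.choose j : ℚ) * binomQ y (j+1) * z^(j+1)
        = z * ∑ j ∈ range (m+1), (m.choose j : ℚ) * binomQ y (j+1) * z^j := by
          rw [Finset.mul_sum]; exact Finset.sum_congr rfl (fun j _ => by ring)
      _ = z * ∑ i ∈ range (m+1), (m.choose i : ℚ) * binomQ (y + (m:ℚ) - (i:ℚ)) (m+1) * (z-1)^i := by
          rw [deriv_identity m y z]
      _ = ∑ i ∈ range (m+1), (m.choose i : ℚ) * binomQ (y + (m:ℚ) - (i:ℚ)) (m+1) *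
            ((z-1)^(i+1) + (z-1)^i) := by
          rw [Finset.mul_sum]; exact Finset.sum_congr rfl (fun i _ => by ring)
  have hev : P.eval 1 = Q.eval 1 := by
    rw [hP, hQ]
    simp only [Polynomial.eval_finset_sum, Polynomial.eval_mul, Polynomial.eval_add,
      Polynomial.eval_C, Polynomial.eval_pow, Polynomial.eval_sub, Polynomial.eval_X,
      Polynomial.eval_one, one_pow, mul_one]
    rw [eval_one_identity m y]
    simp
  have hPQ : P = Q := by
    have h0 : Polynomial.derivative (P - Q) = 0 := by
      rw [Polynomial.derivative_sub, hde, sub_self]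
    have hC := Polynomial.eq_C_of_derivative_eq_zero h0
    have he := congrArg (Polynomial.eval 1) hC
    rw [Polynomial.eval_sub, Polynomial.eval_C, hev, sub_self] at he
    rw [← he, map_zero] at hC
    exact sub_eq_zero.mp hC
  have := congrArg (Polynomial.eval x) hPQ
  rw [hP, hQ] at this
  simp only [Polynomial.eval_finset_sum, Polynomial.eval_mul, Polynomial.eval_add,
    Polynomial.eval_C, Polynomial.eval_pow, Polynomial.eval_sub, Polynomial.eval_X,
    Polynomial.eval_one] at this
  exact this
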